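/- Type A action of Ŝ on tableaux (single-box raising): let g be of type A_n with adapted ι, fix j₁ < ⋯ < j_k in {1,...,n+1} and s ∈ ℤ, and set T = [j₁,...,j_k]^A_s = Σ_{i=1}^k box^A_{j_i}(s+k−i). Suppose i ∈ [1,k] satisfies j_i = j ≤ n, j_{i+1} ≠ j+1 (with j_{k+1} := n+2), and m := s + k − i + P(j) ≥ 1. Then the coefficient of x_{m,j} in T is +1, and T − β_{m,j} = [j₁,...,j_{i−1}, j+1, j_{i+1},...,j_k]^A_s; in particular Ŝ_{m,j} T = [j₁,...,j_{i−1}, j+1, j_{i+1},...,j_k]^A_s. -/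

import Mathlib

/-! Combinatorics of an adapted sequence `ι` for a classical Lie algebra, and the
column-tableau linear forms of Kanakubo–Nakashima in re-indexed coordinates `x_{m,j}`
(the coordinate for the `m`-th occurrence of the index `j` in `ι`). -/

noncomputable section

/-- First position `m ≥ 1` with `ι m ∈ {i, j}`. -/
def firstBoth (ι : ℕ → ℕ) (i j : ℕ) : ℕ := sInf {m | 1 ≤ m ∧ (ι m = i ∨ ι m = j)}

/-- `p_{i,j} = 1` if `i` occurs before `j` in `ι`, and `0` otherwise. -/
def pOf (ι : ℕ → ℕ) (i j : ℕ) : ℕ := if ι (firstBoth ι i j) = i then 1 else 0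

/-- `ι⁽ⁱ⁾`, the first position of `ι` at which `i` occurs. -/
def firstOcc (ι : ℕ → ℕ) (i : ℕ) : ℕ := sInf {m | 1 ≤ m ∧ ι m = i}

/-- `P(k) = p_{2,1} + p_{3,2} + ⋯ + p_{k,k-1}` (so `P 0 = P 1 = 0`). -/
def Pof (ι : ℕ → ℕ) (k : ℕ) : ℕ := ∑ i ∈ Finset.Icc 2 k, pOf ι i (i - 1)

/-- The condition that every index `1,…,n` occurs infinitely often in `ι` and
consecutive entries of `ι` differ. -/
def SeqCond (n : ℕ) (ι : ℕ → ℕ) : Prop :=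
  (∀ m, 1 ≤ m → 1 ≤ ι m ∧ ι m ≤ n) ∧
  (∀ m, 1 ≤ m → ι m ≠ ι (m + 1)) ∧
  (∀ i, 1 ≤ i → i ≤ n → ∀ N : ℕ, ∃ m, N < m ∧ ι m = i)

/-- `ι` is adapted to the type `A_n` Cartan matrix: for adjacent indices `i, j`, any two
consecutive members of the subsequence of `ι` consisting of `i`'s and `j`'s differ. -/
def AdaptedA (n : ℕ) (ι : ℕ → ℕ) : Prop :=
  ∀ i j : ℕ, 1 ≤ i → i ≤ n → 1 ≤ j → j ≤ n → (i = j + 1 ∨ j = i + 1) →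
    ∀ m m' : ℕ, 1 ≤ m → m < m' → (ι m = i ∨ ι m = j) → (ι m' = i ∨ ι m' = j) →
      (∀ r, m < r → r < m' → ι r ≠ i ∧ ι r ≠ j) → ι m ≠ ι m'

/-- Linear forms on `ℚ^∞`, presented by their coefficients in the re-indexed
coordinates `x_{m,j}`. -/
abbrev LinF : Type := ℤ × ℕ → ℚ

/-- The coordinate functional `x_{m,j}` (zero when `m ≤ 0`, `j = 0` or `j > n`). -/
def XT (n : ℕ) (m : ℤ) (j : ℕ) : LinF :=
  fun q => if q = (m, j) ∧ 1 ≤ m ∧ 1 ≤ j ∧ j ≤ n then 1 else 0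

/-- The box `⌈j⌉^A_s = x_{s+P(j),j} − x_{s+P(j−1)+1,j−1}` of type `A_n`. -/
def boxA (n : ℕ) (ι : ℕ → ℕ) (j : ℕ) (s : ℤ) : LinF :=
  XT n (s + (Pof ι j : ℤ)) j - XT n (s + (Pof ι (j - 1) : ℤ) + 1) (j - 1)

/-- The column tableau `[j₁,…,j_k]^A_s = Σ_{i=1}^k ⌈j_i⌉^A_{s+k−i}` (here `j` is
`0`-indexed: `j ⟨0⟩ = j₁, …`). -/
def tabA (n : ℕ) (ι : ℕ → ℕ) {k : ℕ} (j : Fin k → ℕ) (s : ℤ) : LinF :=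
  ∑ i : Fin k, boxA n ι (j i) (s + (k : ℤ) - 1 - ((i : ℕ) : ℤ))

/-- The Nakashima–Zelevinsky form `β_{m,j}` in re-indexed coordinates, for `ι` adapted
to a type `A` Cartan matrix:
`β_{m,j} = x_{m,j} + x_{m+1,j} − x_{m+p_{j−1,j},j−1} − x_{m+p_{j+1,j},j+1}`. -/
def betaA (n : ℕ) (ι : ℕ → ℕ) (m : ℤ) (j : ℕ) : LinF :=
  XT n m j + XT n (m + 1) j - XT n (m + (pOf ι (j - 1) j : ℤ)) (j - 1)
    - XT n (m + (pOf ι (j + 1) j : ℤ)) (j + 1)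

/-- Affine-linear forms: a constant term together with a linear form. -/
abbrev AffF : Type := ℚ × LinF

/-- The form `β⁽⁻⁾_{m,j}` in re-indexed coordinates: `β_{m−1,j}` when `m ≥ 2`, and the
`λ`-dependent form with constant term `−⟨h_j, λ⟩` when `m = 1`. -/
def betaMA (n : ℕ) (ι : ℕ → ℕ) (lam : ℕ → ℤ) (m : ℤ) (j : ℕ) : AffF :=
  ((if m = 1 then -(lam j : ℚ) else 0), betaA n ι (m - 1) j)

/-- The operator `Ŝ_{m,j}` of the polyhedral realization of `B(λ)` in re-indexed
coordinates. -/
def ShatA (n : ℕ) (ι : ℕ → ℕ) (lam : ℕ → ℤ) (m : ℤ) (j : ℕ) (φ : AffF) : AffF :=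
  if 0 < φ.2 (m, j) then φ - φ.2 (m, j) • (((0 : ℚ), betaA n ι m j) : AffF)
  else φ - φ.2 (m, j) • betaMA n ι lam m j

end

section AuxLemmas

lemma firstBoth_comm (ι : ℕ → ℕ) (i j : ℕ) : firstBoth ι i j = firstBoth ι j i := by
  unfold firstBoth
  congr 1
  ext m
  simp [or_comm]

lemma firstBoth_mem {n : ℕ} {ι : ℕ → ℕ} (hseq : SeqCond n ι) {i : ℕ} (j : ℕ)
    (hi1 : 1 ≤ i) (hin : i ≤ n) :
    1 ≤ firstBoth ι i j ∧ (ι (firstBoth ι i j) = i ∨ ι (firstBoth ι i j) = j) := by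
  have hne : ∃ m, m ∈ {m | 1 ≤ m ∧ (ι m = i ∨ ι m = j)} := by
    obtain ⟨m, hm, hmi⟩ := hseq.2.2 i hi1 hin 0
    exact ⟨m, hm, Or.inl hmi⟩
  exact Nat.sInf_mem hne

lemma pOf_add {n : ℕ} {ι : ℕ → ℕ} (hseq : SeqCond n ι) {i j : ℕ}
    (hij : i ≠ j) (hi1 : 1 ≤ i) (hin : i ≤ n) :
    pOf ι i j + pOf ι j i = 1 := by
  obtain ⟨h1, h2⟩ := firstBoth_mem hseq j hi1 hin
  unfold pOf
  rw [firstBoth_comm ι j i]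
  rcases h2 with h | h
  · rw [if_pos h, if_neg (by rw [h]; exact hij)]
  · rw [if_neg (by rw [h]; exact (Ne.symm hij)), if_pos h]

lemma Pof_succ (ι : ℕ → ℕ) {t : ℕ} (ht : 1 ≤ t) :
    Pof ι (t + 1) = Pof ι t + pOf ι (t + 1) t := by
  unfold Pof
  rw [Finset.sum_Icc_succ_top (by omega : 2 ≤ t + 1)]
  simp

lemma XT_zero (n : ℕ) (m : ℤ) : XT n m 0 = 0 := by
  funext q
  simp [XT]

lemma box_step {n : ℕ} {ι : ℕ → ℕ} (hseq : SeqCond n ι) {jv : ℕ}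
    (h1 : 1 ≤ jv) (hn : jv ≤ n) (s' : ℤ) :
    boxA n ι (jv + 1) s' = boxA n ι jv s' - betaA n ι (s' + (Pof ι jv : ℤ)) jv := by
  unfold boxA betaA
  simp only [Nat.add_sub_cancel]
  have e1 : s' + (Pof ι jv : ℤ) + (pOf ι (jv + 1) jv : ℤ) = s' + (Pof ι (jv + 1) : ℤ) := by
    rw [Pof_succ ι h1]; push_cast; ring
  rw [e1]
  rcases eq_or_lt_of_le h1 with h | h
  · have hjv1 : jv = 1 := h.symm
    subst hjv1
    simp only [Nat.sub_self, XT_zero]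
    abel
  · have e2 : s' + (Pof ι jv : ℤ) + (pOf ι (jv - 1) jv : ℤ)
        = s' + (Pof ι (jv - 1) : ℤ) + 1 := by
      have hP : Pof ι (jv - 1 + 1) = Pof ι (jv - 1) + pOf ι (jv - 1 + 1) (jv - 1) :=
        Pof_succ ι (by omega)
      rw [Nat.sub_add_cancel h1] at hP
      have hpp : pOf ι jv (jv - 1) + pOf ι (jv - 1) jv = 1 :=
        pOf_add hseq (by omega) h1 hn
      omega
    rw [e2]
    abel

end AuxLemmas

/-- Type `A` single-box raising.  For a column `j₁ < ⋯ < j_k` in `{1,…,n+1}` (`0`-indexed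
`a ↦ j_{a+1}`), `T = [j₁,…,j_k]^A_s`, and `a` with `j_{a+1} = jv ≤ n`,
`j_{a+2} ≠ jv + 1` (with the convention `j_{k+1} = n+2`), and
`m = s + k − (a+1) + P(jv) ≥ 1`:
the coefficient of `x_{m,jv}` in `T` is `+1`, `T − β_{m,jv}` is the tableau with
`j_{a+1}` replaced by `jv + 1`, and in particular `Ŝ_{m,jv} T` is that tableau. -/

theorem ShatA_raises_box (n : ℕ) (ι : ℕ → ℕ) (lam : ℕ → ℤ)
    (hseq : SeqCond n ι) (had : AdaptedA n ι)
    (k : ℕ) (hk : 1 ≤ k) (j : Fin k → ℕ) (hmono : StrictMono j)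
    (hrange : ∀ i, 1 ≤ j i ∧ j i ≤ n + 1) (s : ℤ)
    (a : Fin k) (jv : ℕ) (hja : j a = jv) (hjv : jv ≤ n)
    (hnext : ∀ a' : Fin k, (a' : ℕ) = (a : ℕ) + 1 → j a' ≠ jv + 1)
    (m : ℤ) (hm : m = s + (k : ℤ) - 1 - ((a : ℕ) : ℤ) + (Pof ι jv : ℤ)) (hm1 : 1 ≤ m) :
    tabA n ι j s (m, jv) = 1 ∧
    tabA n ι j s - betaA n ι m jv = tabA n ι (Function.update j a (jv + 1)) s ∧
    ShatA n ι lam m jv (((0 : ℚ), tabA n ι j s) : AffF) =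
      (((0 : ℚ), tabA n ι (Function.update j a (jv + 1)) s) : AffF) := by
  classical
  have hjv1 : 1 ≤ jv := hja ▸ (hrange a).1
  have c1 : tabA n ι j s (m, jv) = 1 := by
    have hother : ∀ b : Fin k, b ∈ Finset.univ → b ≠ a →
        boxA n ι (j b) (s + (k : ℤ) - 1 - ((b : ℕ) : ℤ)) (m, jv) = 0 := by
      intro i _ hia
      simp only [boxA, Pi.sub_apply, XT, Prod.mk.injEq]
      rw [if_neg, if_neg]
      · norm_num
      · rintro ⟨⟨hpos, hj⟩, -, h1, -⟩
        have hji : j i = jv + 1 := by omega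
        rw [show j i - 1 = jv by omega] at hpos
        have hieq : (i : ℕ) = (a : ℕ) + 1 := by omega
        exact hnext i hieq hji
      · rintro ⟨⟨-, hj⟩, -, -, -⟩
        exact hia (hmono.injective (by rw [hja, hj]))
    have ha : boxA n ι (j a) (s + (k : ℤ) - 1 - ((a : ℕ) : ℤ)) (m, jv) = 1 := by
      rw [hja]
      simp only [boxA, Pi.sub_apply, XT, Prod.mk.injEq]
      rw [if_pos ⟨⟨hm, trivial⟩, by omega, hjv1, hjv⟩,
        if_neg (by rintro ⟨⟨-, hj⟩, -, h1, -⟩; omega)]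
      norm_num
    rw [tabA, Finset.sum_apply,
      Finset.sum_eq_single a hother (fun h => absurd (Finset.mem_univ a) h), ha]
  have hbs : boxA n ι (jv + 1) (s + (k : ℤ) - 1 - ((a : ℕ) : ℤ))
      = boxA n ι jv (s + (k : ℤ) - 1 - ((a : ℕ) : ℤ)) - betaA n ι m jv := by
    rw [hm]
    exact box_step hseq hjv1 hjv _
  have c2 : tabA n ι j s - betaA n ι m jv = tabA n ι (Function.update j a (jv + 1)) s := by
    unfold tabA
    have key : ∀ i : Fin k, boxA n ι (Function.update j a (jv + 1) i)
        (s + (k : ℤ) - 1 - ((i : ℕ) : ℤ))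
        = Function.update (fun i : Fin k => boxA n ι (j i) (s + (k : ℤ) - 1 - ((i : ℕ) : ℤ)))
            a (boxA n ι (jv + 1) (s + (k : ℤ) - 1 - ((a : ℕ) : ℤ))) i := by
      intro i
      rcases eq_or_ne i a with rfl | h
      · simp
      · simp [Function.update_of_ne h]
    rw [Finset.sum_congr rfl (fun i _ => key i),
      Finset.sum_update_of_mem (Finset.mem_univ a), hbs,
      Finset.sum_eq_sum_sdiff_singleton_add (Finset.mem_univ a)
        (fun i : Fin k => boxA n ι (j i) (s + (k : ℤ) - 1 - ((i : ℕ) : ℤ))), hja]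
    abel
  refine ⟨c1, c2, ?_⟩
  rw [ShatA]
  have h2 : (((0 : ℚ), tabA n ι j s) : AffF).2 (m, jv) = 1 := c1
  rw [h2, if_pos one_pos, one_smul, Prod.mk_sub_mk, sub_zero, c2]
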